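/- Let V, W be finite-dimensional vector spaces over a field K, c_A ⊆ V and c_B ⊆ W nonempty sets whose affine hulls contain bases of V and W respectively, and such that there are functionals u_A ∈ V*, u_B ∈ W* equal to 1 on c_A, c_B respectively. Let h ∈ V ⊗ W be non-signalling: there exist m ∈ affineHull(c_A) and n ∈ affineHull(c_B) with (id ⊗ π)(h) = m for every π ∈ W* with π ≡ 1 on c_B, and (σ ⊗ id)(h) = n for every σ ∈ V* with σ ≡ 1 on c_A. Then h lies in the affine hull of the product set { a ⊗ b | a ∈ affineHull(c_A), b ∈ affineHull(c_B) }. -/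

import Mathlib

open TensorProduct

/-- Contraction of the second tensor factor by a functional:
`(id ⊗ π)(v ⊗ w) = π w • v`. -/
noncomputable def contractR (K V W : Type*) [Field K] [AddCommGroup V] [Module K V]
    [AddCommGroup W] [Module K W] (π : W →ₗ[K] K) : V ⊗[K] W →ₗ[K] V :=
  (TensorProduct.rid K V).toLinearMap ∘ₗ TensorProduct.map LinearMap.id π

/-- Contraction of the first tensor factor by a functional:
`(σ ⊗ id)(v ⊗ w) = σ v • w`. -/
noncomputable def contractL (K V W : Type*) [Field K] [AddCommGroup V] [Module K V]
    [AddCommGroup W] [Module K W] (σ : V →ₗ[K] K) : V ⊗[K] W →ₗ[K] W :=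
  (TensorProduct.lid K W).toLinearMap ∘ₗ TensorProduct.map σ LinearMap.id

/-- nonsignalling implies affine combination of products.  If `c_A`,
`c_B` are nonempty sets whose affine hulls contain bases, normalised by functionals
`u_A`, `u_B`, and `h ∈ V ⊗ W` has constant left residual `m ∈ aff(c_A)` and constant
right residual `n ∈ aff(c_B)` under all normalised effects, then `h` lies in the
affine hull of the set of product states of affine combinations. -/
theorem nonsignalling_mem_affine_hull_of_products {K V W : Type*} [Field K]
    [AddCommGroup V] [Module K V] [FiniteDimensional K V]
    [AddCommGroup W] [Module K W] [FiniteDimensional K W]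
    (cA : Set V) (cB : Set W) (hAne : cA.Nonempty) (hBne : cB.Nonempty)
    (hAbasis : ∃ b : Module.Basis (Fin (Module.finrank K V)) K V,
      ∀ i, b i ∈ (affineSpan K cA : Set V))
    (hBbasis : ∃ b : Module.Basis (Fin (Module.finrank K W)) K W,
      ∀ i, b i ∈ (affineSpan K cB : Set W))
    (uA : V →ₗ[K] K) (huA : ∀ a ∈ cA, uA a = 1)
    (uB : W →ₗ[K] K) (huB : ∀ b ∈ cB, uB b = 1)
    (h : V ⊗[K] W) (m : V) (n : W)
    (hmmem : m ∈ (affineSpan K cA : Set V)) (hnmem : n ∈ (affineSpan K cB : Set W))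
    (hleft : ∀ π : W →ₗ[K] K, (∀ g ∈ cB, π g = 1) → contractR K V W π h = m)
    (hright : ∀ σ : V →ₗ[K] K, (∀ a ∈ cA, σ a = 1) → contractL K V W σ h = n) :
    h ∈ affineSpan K {x : V ⊗[K] W |
      ∃ a ∈ (affineSpan K cA : Set V), ∃ b ∈ (affineSpan K cB : Set W),
        x = a ⊗ₜ[K] b} := by
  classical
  obtain ⟨a₀, ha₀⟩ := hAne
  obtain ⟨b₀, hb₀⟩ := hBne
  obtain ⟨bA, hbA⟩ := hAbasis
  obtain ⟨bB, hbB⟩ := hBbasis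
  set S : Set (V ⊗[K] W) := {x : V ⊗[K] W |
      ∃ a ∈ (affineSpan K cA : Set V), ∃ b ∈ (affineSpan K cB : Set W),
        x = a ⊗ₜ[K] b} with hSdef
  have ha₀' : a₀ ∈ (affineSpan K cA : Set V) := subset_affineSpan K cA ha₀
  have hb₀' : b₀ ∈ (affineSpan K cB : Set W) := subset_affineSpan K cB hb₀
  have hmemS : ∀ a ∈ (affineSpan K cA : Set V), ∀ b ∈ (affineSpan K cB : Set W),
      a ⊗ₜ[K] b ∈ S := fun a ha b hb => ⟨a, ha, b, hb, rfl⟩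
  -- uA vanishes on vectorSpan cA, similarly uB
  have huA0 : ∀ x ∈ vectorSpan K cA, uA x = 0 := by
    intro x hx
    induction hx using Submodule.span_induction with
    | mem y hy =>
      obtain ⟨p, hp, q, hq, rfl⟩ := hy
      simp [vsub_eq_sub, huA p hp, huA q hq]
    | zero => simp
    | add y z _ _ hy hz => simp [hy, hz]
    | smul c y _ hy => simp [hy]
  have huB0 : ∀ x ∈ vectorSpan K cB, uB x = 0 := by
    intro x hx
    induction hx using Submodule.span_induction with
    | mem y hy =>
      obtain ⟨p, hp, q, hq, rfl⟩ := hy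
      simp [vsub_eq_sub, huB p hp, huB q hq]
    | zero => simp
    | add y z _ _ hy hz => simp [hy, hz]
    | smul c y _ hy => simp [hy]
  -- uA = 1 on affineSpan cA, similarly uB
  have huA1 : ∀ x ∈ (affineSpan K cA : Set V), uA x = 1 := by
    intro x hx
    have hd : x -ᵥ a₀ ∈ vectorSpan K cA := by
      rw [← direction_affineSpan K cA]
      exact AffineSubspace.vsub_mem_direction hx ha₀'
    have h0 := huA0 _ hd
    rw [vsub_eq_sub, map_sub] at h0
    have h1 := huA a₀ ha₀
    linear_combination h0 + h1
  have huB1 : ∀ x ∈ (affineSpan K cB : Set W), uB x = 1 := by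
    intro x hx
    have hd : x -ᵥ b₀ ∈ vectorSpan K cB := by
      rw [← direction_affineSpan K cB]
      exact AffineSubspace.vsub_mem_direction hx hb₀'
    have h0 := huB0 _ hd
    rw [vsub_eq_sub, map_sub] at h0
    have h1 := huB b₀ hb₀
    linear_combination h0 + h1
  -- kernel of uA is vectorSpan cA (direction inclusion we need)
  have hkerA : ∀ x : V, uA x = 0 → x ∈ vectorSpan K cA := by
    intro x hx
    have hrepr : x = ∑ i, bA.repr x i • bA i := (bA.sum_repr x).symm
    have hsum : (∑ i, bA.repr x i) = 0 := by
      have hux : uA x = ∑ i, bA.repr x i := by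
        conv_lhs => rw [hrepr]
        rw [map_sum]
        refine Finset.sum_congr rfl fun i _ => ?_
        rw [map_smul, huA1 _ (hbA i), smul_eq_mul, mul_one]
      rw [← hux, hx]
    have hx2 : x = ∑ i, bA.repr x i • (bA i - a₀) := by
      have : ∑ i, bA.repr x i • (bA i - a₀)
          = (∑ i, bA.repr x i • bA i) - (∑ i, bA.repr x i) • a₀ := by
        rw [Finset.sum_smul, ← Finset.sum_sub_distrib]
        exact Finset.sum_congr rfl fun i _ => smul_sub _ _ _
      rw [this, hsum, zero_smul, sub_zero, ← hrepr]
    rw [hx2]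
    refine Submodule.sum_mem _ fun i _ => Submodule.smul_mem _ _ ?_
    rw [← vsub_eq_sub, ← direction_affineSpan K cA]
    exact AffineSubspace.vsub_mem_direction (hbA i) ha₀'
  have hkerB : ∀ x : W, uB x = 0 → x ∈ vectorSpan K cB := by
    intro x hx
    have hrepr : x = ∑ i, bB.repr x i • bB i := (bB.sum_repr x).symm
    have hsum : (∑ i, bB.repr x i) = 0 := by
      have hux : uB x = ∑ i, bB.repr x i := by
        conv_lhs => rw [hrepr]
        rw [map_sum]
        refine Finset.sum_congr rfl fun i _ => ?_
        rw [map_smul, huB1 _ (hbB i), smul_eq_mul, mul_one]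
      rw [← hux, hx]
    have hx2 : x = ∑ i, bB.repr x i • (bB i - b₀) := by
      have : ∑ i, bB.repr x i • (bB i - b₀)
          = (∑ i, bB.repr x i • bB i) - (∑ i, bB.repr x i) • b₀ := by
        rw [Finset.sum_smul, ← Finset.sum_sub_distrib]
        exact Finset.sum_congr rfl fun i _ => smul_sub _ _ _
      rw [this, hsum, zero_smul, sub_zero, ← hrepr]
    rw [hx2]
    refine Submodule.sum_mem _ fun i _ => Submodule.smul_mem _ _ ?_
    rw [← vsub_eq_sub, ← direction_affineSpan K cB]
    exact AffineSubspace.vsub_mem_direction (hbB i) hb₀'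
  -- products of directions lie in the vector span of S
  have hdd : ∀ d ∈ vectorSpan K cA, ∀ e ∈ vectorSpan K cB,
      d ⊗ₜ[K] e ∈ vectorSpan K S := by
    intro d hd
    induction hd using Submodule.span_induction with
    | mem y hy =>
      obtain ⟨p, hp, q, hq, rfl⟩ := hy
      intro e he
      induction he using Submodule.span_induction with
      | mem z hz =>
        obtain ⟨r, hr, s, hs, rfl⟩ := hz
        have hp' := subset_affineSpan K cA hp
        have hq' := subset_affineSpan K cA hq
        have hr' := subset_affineSpan K cB hr
        have hs' := subset_affineSpan K cB hs
        have e1 : p ⊗ₜ[K] r -ᵥ q ⊗ₜ[K] r ∈ vectorSpan K S :=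
          vsub_mem_vectorSpan K (hmemS p hp' r hr') (hmemS q hq' r hr')
        have e2 : p ⊗ₜ[K] s -ᵥ q ⊗ₜ[K] s ∈ vectorSpan K S :=
          vsub_mem_vectorSpan K (hmemS p hp' s hs') (hmemS q hq' s hs')
        have key : (p -ᵥ q) ⊗ₜ[K] (r -ᵥ s)
            = (p ⊗ₜ[K] r -ᵥ q ⊗ₜ[K] r) - (p ⊗ₜ[K] s -ᵥ q ⊗ₜ[K] s) := by
          simp only [vsub_eq_sub, sub_tmul, tmul_sub]
        rw [key]
        exact Submodule.sub_mem _ e1 e2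
      | zero => simp
      | add y z _ _ hy hz =>
        rw [tmul_add]
        exact Submodule.add_mem _ hy hz
      | smul c y _ hy =>
        rw [tmul_smul]
        exact Submodule.smul_mem _ _ hy
    | zero => intro e he; simp
    | add y z _ _ hy hz =>
      intro e he
      rw [add_tmul]
      exact Submodule.add_mem _ (hy e he) (hz e he)
    | smul c y _ hy =>
      intro e he
      rw [← smul_tmul']
      exact Submodule.smul_mem _ _ (hy e he)
  -- projection maps
  set dA : V →ₗ[K] V := LinearMap.id - uA.smulRight a₀ with hdA
  set dB : W →ₗ[K] W := LinearMap.id - uB.smulRight b₀ with hdB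
  have hdAker : ∀ v : V, uA (dA v) = 0 := by
    intro v
    simp [hdA, huA a₀ ha₀]
  have hdBker : ∀ w : W, uB (dB w) = 0 := by
    intro w
    simp [hdB, huB b₀ hb₀]
  -- the decomposition identity as an equality of linear maps
  set L : V ⊗[K] W →ₗ[K] V ⊗[K] W :=
    (uB ∘ₗ contractL K V W uA).smulRight (a₀ ⊗ₜ[K] b₀)
    + (TensorProduct.mk K V W a₀) ∘ₗ (dB ∘ₗ contractL K V W uA)
    + ((TensorProduct.mk K V W).flip b₀) ∘ₗ (dA ∘ₗ contractR K V W uB)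
    + TensorProduct.map dA dB with hL
  have hLid : L = LinearMap.id := by
    apply TensorProduct.ext'
    intro v w
    simp only [hL, hdA, hdB, LinearMap.add_apply, LinearMap.coe_comp, Function.comp_apply,
      LinearMap.smulRight_apply, LinearMap.sub_apply, LinearMap.id_apply,
      contractL, contractR, TensorProduct.map_tmul, LinearEquiv.coe_coe,
      TensorProduct.lid_tmul, TensorProduct.rid_tmul, TensorProduct.mk_apply,
      LinearMap.flip_apply, map_smul, smul_eq_mul]
    simp only [tmul_sub, sub_tmul, smul_sub, ← smul_tmul', tmul_smul, smul_smul]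
    module
  have hdecomp : h = (uB (contractL K V W uA h)) • (a₀ ⊗ₜ[K] b₀)
      + a₀ ⊗ₜ[K] (dB (contractL K V W uA h))
      + (dA (contractR K V W uB h)) ⊗ₜ[K] b₀
      + TensorProduct.map dA dB h := by
    conv_lhs => rw [← LinearMap.id_apply (R := K) h, ← hLid]
    simp [hL]
  rw [hright uA huA, hleft uB huB, huB1 n hnmem, one_smul] at hdecomp
  -- membership of the map dA dB part
  have hmapmem : ∀ t : V ⊗[K] W, TensorProduct.map dA dB t ∈ vectorSpan K S := by
    intro t
    induction t using TensorProduct.induction_on with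
    | zero => simp
    | tmul v w =>
      rw [TensorProduct.map_tmul]
      exact hdd _ (hkerA _ (hdAker v)) _ (hkerB _ (hdBker w))
    | add x y hx hy =>
      rw [map_add]
      exact Submodule.add_mem _ hx hy
  -- assemble: h - a₀ ⊗ b₀ ∈ vectorSpan K S
  have hsub : h - a₀ ⊗ₜ[K] b₀ ∈ vectorSpan K S := by
    have e1 : a₀ ⊗ₜ[K] n -ᵥ a₀ ⊗ₜ[K] b₀ ∈ vectorSpan K S :=
      vsub_mem_vectorSpan K (hmemS a₀ ha₀' n hnmem) (hmemS a₀ ha₀' b₀ hb₀')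
    have e2 : m ⊗ₜ[K] b₀ -ᵥ a₀ ⊗ₜ[K] b₀ ∈ vectorSpan K S :=
      vsub_mem_vectorSpan K (hmemS m hmmem b₀ hb₀') (hmemS a₀ ha₀' b₀ hb₀')
    have e3 := hmapmem h
    have heq : h - a₀ ⊗ₜ[K] b₀
        = (a₀ ⊗ₜ[K] n -ᵥ a₀ ⊗ₜ[K] b₀) + (m ⊗ₜ[K] b₀ -ᵥ a₀ ⊗ₜ[K] b₀)
          + TensorProduct.map dA dB h := by
      conv_lhs => rw [hdecomp]
      have hdBn : dB n = n - b₀ := by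
        simp [hdB, huB1 n hnmem]
      have hdAm : dA m = m - a₀ := by
        simp [hdA, huA1 m hmmem]
      rw [hdBn, hdAm]
      simp only [vsub_eq_sub, tmul_sub, sub_tmul]
      abel
    rw [heq]
    exact Submodule.add_mem _ (Submodule.add_mem _ e1 e2) e3
  have hfin : h = (h - a₀ ⊗ₜ[K] b₀) +ᵥ (a₀ ⊗ₜ[K] b₀) := by
    simp [vadd_eq_add]
  rw [hfin]
  refine AffineSubspace.vadd_mem_of_mem_direction ?_
    (subset_affineSpan K S (hmemS a₀ ha₀' b₀ hb₀'))
  rw [direction_affineSpan]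
  exact hsub
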